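/- For every n ≥ 2, the number of permutations π ∈ S_n that avoid the generalized pattern 23-1 and satisfy π_1 = 1 equals the Bell number B_{n-1}; and for every k with 2 ≤ k ≤ n, the number of permutations π ∈ S_n that avoid 23-1 and satisfy π_1 = k equals ∇^{n-k}(B_{n-1}) = Σ_{i=0}^{n-k} (-1)^i · C(n-k, i) · B_{n-1-i}. -/

import Mathlib

/-- `π` avoids the generalized pattern 23-1. -/
def Avoids23d1 {n : ℕ} (π : Equiv.Perm (Fin n)) : Prop :=
  ¬ ∃ (i j : Fin n) (h : i.1 + 1 < n), i.1 + 1 < j.1 ∧ π j < π i ∧ π i < π ⟨i.1 + 1, h⟩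

/-- The `m`-th Bell number: the number of partitions of a set with `m` elements,
equivalently the number of equivalence relations (setoids) on `Fin m`. -/
noncomputable def bell (m : ℕ) : ℕ := Nat.card (Setoid (Fin m))

open Finset

attribute [local instance] Classical.propDecidable

namespace BellProof


noncomputable def cls (s : Setoid (Fin n)) (a : Fin n) : Finset (Fin n) :=
  univ.filter (fun b => s a b)

lemma mem_cls {s : Setoid (Fin n)} {a b : Fin n} : b ∈ cls s a ↔ s a b := by
  simp [cls]

lemma self_mem_cls {s : Setoid (Fin n)} {a : Fin n} : a ∈ cls s a :=
  mem_cls.2 (s.refl a)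

noncomputable def mcls (s : Setoid (Fin n)) (a : Fin n) : Fin n :=
  (cls s a).min' ⟨a, self_mem_cls⟩

lemma rel_mcls (s : Setoid (Fin n)) (a : Fin n) : s a (mcls s a) :=
  mem_cls.1 (Finset.min'_mem _ _)

lemma mcls_le (s : Setoid (Fin n)) (a : Fin n) : mcls s a ≤ a :=
  Finset.min'_le _ _ self_mem_cls

lemma mcls_le_of_rel {s : Setoid (Fin n)} {a b : Fin n} (h : s a b) : mcls s a ≤ b :=
  Finset.min'_le _ _ (mem_cls.2 h)

lemma cls_eq_of_rel {s : Setoid (Fin n)} {a b : Fin n} (h : s a b) : cls s a = cls s b := by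
  ext c; simp only [mem_cls]
  exact ⟨fun hc => s.trans (s.symm h) hc, fun hc => s.trans h hc⟩

lemma mcls_eq_of_rel {s : Setoid (Fin n)} {a b : Fin n} (h : s a b) : mcls s a = mcls s b := by
  unfold mcls; congr 1; exact cls_eq_of_rel h

lemma rel_of_mcls_eq {s : Setoid (Fin n)} {a b : Fin n} (h : mcls s a = mcls s b) : s a b :=
  s.trans (rel_mcls s a) (h ▸ s.symm (rel_mcls s b))

lemma rel_iff_mcls_eq {s : Setoid (Fin n)} {a b : Fin n} : s a b ↔ mcls s a = mcls s b :=
  ⟨mcls_eq_of_rel, rel_of_mcls_eq⟩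

lemma mcls_mcls (s : Setoid (Fin n)) (a : Fin n) : mcls s (mcls s a) = mcls s a :=
  (mcls_eq_of_rel (s.symm (rel_mcls s a)))

noncomputable def key (s : Setoid (Fin n)) (a : Fin n) : Fin n ×ₗ (Fin n)ᵒᵈ :=
  toLex (mcls s a, OrderDual.toDual a)

lemma key_injective (s : Setoid (Fin n)) : Function.Injective (key s) := by
  intro a b h
  have := congrArg (fun x => (ofLex x).2) h
  simpa [key] using this

lemma key_lt_iff {s : Setoid (Fin n)} {a b : Fin n} :
    key s a < key s b ↔ mcls s a < mcls s b ∨ (mcls s a = mcls s b ∧ b < a) := by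
  unfold key
  rw [Prod.Lex.lt_iff]
  simp

lemma key_le_iff {s : Setoid (Fin n)} {a b : Fin n} :
    key s a ≤ key s b ↔ mcls s a < mcls s b ∨ (mcls s a = mcls s b ∧ b ≤ a) := by
  unfold key
  rw [Prod.Lex.le_iff]
  simp

lemma mcls_le_of_key_le {s : Setoid (Fin n)} {a b : Fin n} (h : key s a ≤ key s b) :
    mcls s a ≤ mcls s b := by
  rcases key_le_iff.1 h with h | ⟨h, _⟩
  · exact h.le
  · exact h.le

noncomputable def keyset (s : Setoid (Fin n)) : Finset (Fin n ×ₗ (Fin n)ᵒᵈ) :=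
  univ.image (key s)

lemma keyset_card (s : Setoid (Fin n)) : (keyset s).card = n := by
  rw [keyset, Finset.card_image_of_injective _ (key_injective s)]
  simp

noncomputable def G (s : Setoid (Fin n)) : Equiv.Perm (Fin n) :=
  ((keyset s).orderIsoOfFin (keyset_card s)).toEquiv.trans
    ((Equiv.subtypeEquiv (Equiv.refl _) (by
        intro x
        simp [keyset, Set.mem_range, Finset.mem_image]
        )).trans (Equiv.ofInjective (key s) (key_injective s)).symm)

lemma key_G (s : Setoid (Fin n)) (i : Fin n) :
    key s (G s i) = ((keyset s).orderIsoOfFin (keyset_card s) i : Fin n ×ₗ (Fin n)ᵒᵈ) := by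
  simp only [G, Equiv.trans_apply, Equiv.subtypeEquiv_apply, Equiv.refl_apply]
  exact Equiv.apply_ofInjective_symm (key_injective s) _

lemma key_G_strictMono (s : Setoid (Fin n)) : StrictMono (fun i => key s (G s i)) := by
  intro i j hij
  show key s (G s i) < key s (G s j)
  rw [key_G, key_G]
  exact_mod_cast ((keyset s).orderIsoOfFin (keyset_card s)).strictMono hij

/-- At a block boundary, the left value is the minimum of its block. -/
lemma G_eq_mcls_of_boundary {s : Setoid (Fin n)} {i : Fin n} (h : i.1 + 1 < n)
    (hm : mcls s (G s i) < mcls s (G s ⟨i.1 + 1, h⟩)) : G s i = mcls s (G s i) := by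
  set π := G s with hπ
  set v := mcls s (π i) with hv
  set q := π.symm v with hq
  have hπq : π q = v := π.apply_symm_apply v
  have hkq : key s (π q) = toLex (v, OrderDual.toDual v) := by
    rw [hπq, key, mcls_mcls]
  have h1 : key s (π i) ≤ key s (π q) := by
    rw [hkq, key, Prod.Lex.le_iff]
    right
    exact ⟨rfl, by simpa using mcls_le s (π i)⟩
  have hiq : i ≤ q := ((key_G_strictMono s).le_iff_le).1 h1
  have h2 : key s (π q) < key s (π ⟨i.1 + 1, h⟩) := by
    rw [hkq, key, Prod.Lex.lt_iff]
    left
    exact hm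
  have hqi : q < ⟨i.1 + 1, h⟩ := ((key_G_strictMono s).lt_iff_lt).1 h2
  have hq1 : q.1 < i.1 + 1 := by simpa [Fin.lt_def] using hqi
  have hiq1 : i.1 ≤ q.1 := hiq
  have : q = i := Fin.ext (by omega)
  rw [← hπq, this]

theorem G_avoids (s : Setoid (Fin n)) : Avoids23d1 (G s) := by
  rintro ⟨i, j, h, hij, hji, hasc⟩
  set π := G s with hπ
  set i' : Fin n := ⟨i.1 + 1, h⟩ with hi'
  have hii' : i < i' := by rw [Fin.lt_def]; simp [hi']
  have k1 : key s (π i) < key s (π i') := key_G_strictMono s hii'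
  have hm : mcls s (π i) < mcls s (π i') := by
    rcases key_lt_iff.1 k1 with h' | ⟨_, h'⟩
    · exact h'
    · exact absurd hasc (not_lt.2 h'.le)
  have hb : π i = mcls s (π i) := G_eq_mcls_of_boundary h hm
  have hi'j : i' < j := by rw [Fin.lt_def]; exact hij
  have k2 : key s (π i') ≤ key s (π j) := (key_G_strictMono s hi'j).le
  have hm2 : mcls s (π i') ≤ mcls s (π j) := mcls_le_of_key_le k2
  have hlast : mcls s (π j) ≤ π j := mcls_le s (π j)
  have : π i < π j := lt_of_lt_of_le (lt_of_lt_of_le (hb ▸ hm) hm2) hlast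
  exact absurd hji (not_lt.2 this.le)


/-- suffix minimum of π from position i (stub defs from part2 omitted in this test) -/
noncomputable def sufSet (π : Equiv.Perm (Fin n)) (i : Fin n) : Finset (Fin n) :=
  (univ.filter (fun j => i ≤ j)).image π

lemma self_mem_sufSet (π : Equiv.Perm (Fin n)) (i : Fin n) : π i ∈ sufSet π i :=
  Finset.mem_image.2 ⟨i, Finset.mem_filter.2 ⟨mem_univ _, le_refl i⟩, rfl⟩

noncomputable def sufMin (π : Equiv.Perm (Fin n)) (i : Fin n) : Fin n :=
  (sufSet π i).min' ⟨π i, self_mem_sufSet π i⟩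

lemma sufMin_le {π : Equiv.Perm (Fin n)} {i j : Fin n} (h : i ≤ j) : sufMin π i ≤ π j := by
  exact Finset.min'_le _ _ (Finset.mem_image.2 ⟨j, Finset.mem_filter.2 ⟨mem_univ _, h⟩, rfl⟩)

lemma sufMin_exists (π : Equiv.Perm (Fin n)) (i : Fin n) :
    ∃ j, i ≤ j ∧ π j = sufMin π i := by
  have := Finset.min'_mem (sufSet π i) ⟨π i, self_mem_sufSet π i⟩
  obtain ⟨j, hj, hje⟩ := Finset.mem_image.1 this
  exact ⟨j, (Finset.mem_filter.1 hj).2, hje⟩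

lemma sufMin_mono {π : Equiv.Perm (Fin n)} {i j : Fin n} (h : i ≤ j) :
    sufMin π i ≤ sufMin π j := by
  apply Finset.min'_subset
  apply Finset.image_subset_image
  intro x hx
  simp at hx ⊢
  exact le_trans h hx

noncomputable def M (π : Equiv.Perm (Fin n)) (a : Fin n) : Fin n :=
  sufMin π (π.symm a)

lemma M_le (π : Equiv.Perm (Fin n)) (a : Fin n) : M π a ≤ a := by
  have := sufMin_le (π := π) (le_refl (π.symm a))
  rwa [π.apply_symm_apply] at this

lemma M_idem (π : Equiv.Perm (Fin n)) (a : Fin n) : M π (M π a) = M π a := by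
  obtain ⟨j₀, hj₀, hje⟩ := sufMin_exists π (π.symm a)
  have hsymm : π.symm (M π a) = j₀ := by rw [M, ← hje, π.symm_apply_apply]
  refine le_antisymm (M_le π (M π a)) ?_
  show M π a ≤ M π (M π a)
  unfold M at hsymm ⊢
  rw [hsymm]
  exact sufMin_mono hj₀


lemma mcls_ker_M (π : Equiv.Perm (Fin n)) (a : Fin n) :
    mcls (Setoid.ker (M π)) a = M π a := by
  set s := Setoid.ker (M π) with hs
  apply le_antisymm
  · apply mcls_le_of_rel
    show (Setoid.ker (M π)) a (M π a)
    rw [Setoid.ker_def, M_idem]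
  · have h := rel_mcls s a
    rw [hs, Setoid.ker_def] at h
    calc M π a = M π (mcls s a) := h
    _ ≤ mcls s a := M_le π _

lemma M_G (s : Setoid (Fin n)) (a : Fin n) : M (G s) a = mcls s a := by
  set π := G s with hπ
  apply le_antisymm
  · set q := π.symm (mcls s a) with hq
    have hπq : π q = mcls s a := π.apply_symm_apply _
    have hk : key s (π (π.symm a)) ≤ key s (π q) := by
      rw [π.apply_symm_apply, hπq, key, key, Prod.Lex.le_iff]
      right
      exact ⟨(mcls_mcls s a).symm, by simpa using mcls_le s a⟩
    have hle : π.symm a ≤ q := (key_G_strictMono s).le_iff_le.1 hk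
    have := sufMin_le (π := π) hle
    rw [hπq] at this
    exact this
  · obtain ⟨j, hj, hje⟩ := sufMin_exists π (π.symm a)
    have hk : key s (π (π.symm a)) ≤ key s (π j) := (key_G_strictMono s).monotone hj
    rw [π.apply_symm_apply] at hk
    have h1 : mcls s a ≤ mcls s (π j) := mcls_le_of_key_le hk
    have h2 : mcls s (π j) ≤ π j := mcls_le s (π j)
    show mcls s a ≤ sufMin π (π.symm a)
    rw [← hje]
    exact le_trans h1 h2

lemma G_injective : Function.Injective (G (n := n)) := by
  intro s s' h
  have hm : ∀ a, mcls s a = mcls s' a := by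
    intro a
    rw [← M_G s, ← M_G s', h]
  apply Setoid.ext
  intro a b
  rw [rel_iff_mcls_eq, rel_iff_mcls_eq, hm, hm]

theorem key_ker_strictMono {π : Equiv.Perm (Fin n)} (hA : Avoids23d1 π) :
    StrictMono (fun i => key (Setoid.ker (M π)) (π i)) := by
  cases n with
  | zero => intro i j _; exact i.elim0
  | succ m =>
    rw [Fin.strictMono_iff_lt_succ]
    intro i
    set s := Setoid.ker (M π) with hs
    have hkey : ∀ a : Fin (m+1), key s a = toLex (M π a, OrderDual.toDual a) := by
      intro a; rw [key, mcls_ker_M]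
    have hMcs : M π (π i.castSucc) = sufMin π i.castSucc := by
      rw [M, π.symm_apply_apply]
    have hMs : M π (π i.succ) = sufMin π i.succ := by
      rw [M, π.symm_apply_apply]
    show key s (π i.castSucc) < key s (π i.succ)
    rw [hkey, hkey, Prod.Lex.lt_iff]
    rcases lt_trichotomy (π i.castSucc) (π i.succ) with hasc | heq | hdesc
    · left
      show M π (π i.castSucc) < M π (π i.succ)
      rw [hMcs, hMs]
      have hclaim : ∀ j, i.succ ≤ j → π i.castSucc < π j := by
        intro j hj
        rcases eq_or_lt_of_le hj with rfl | hlt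
        · exact hasc
        · by_contra hnot
          have hne : π j ≠ π i.castSucc := by
            intro he
            have hje := π.injective he
            rw [hje] at hlt
            exact absurd hlt (not_lt.2 (Fin.castSucc_lt_succ : i.castSucc < i.succ).le)
          have hjlt : π j < π i.castSucc := lt_of_le_of_ne (not_lt.1 hnot) hne
          have hb : (i.castSucc : Fin (m+1)).1 + 1 < m + 1 :=
            Nat.succ_lt_succ (by simpa using i.isLt)
          have hsucceq : (⟨(i.castSucc : Fin (m+1)).1 + 1, hb⟩ : Fin (m+1)) = i.succ :=
            Fin.ext rfl
          apply hA
          refine ⟨i.castSucc, j, hb, ?_, hjlt, ?_⟩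
          · show i.castSucc.1 + 1 < j.1
            have h' := hlt
            rw [Fin.lt_def] at h'
            simpa using h'
          · rw [hsucceq]
            exact hasc
      have h1 : sufMin π i.castSucc ≤ π i.castSucc := sufMin_le (le_refl _)
      have h2 : π i.castSucc < sufMin π i.succ := by
        unfold sufMin
        refine (Finset.lt_min'_iff _ _).2 ?_
        intro y hy
        obtain ⟨j, hj, rfl⟩ := Finset.mem_image.1 hy
        exact hclaim j (Finset.mem_filter.1 hj).2
      exact lt_of_le_of_lt h1 h2
    · exact absurd (π.injective heq) (Fin.castSucc_lt_succ : i.castSucc < i.succ).ne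
    · have hmono : sufMin π i.castSucc ≤ sufMin π i.succ :=
        sufMin_mono (Fin.castSucc_lt_succ : i.castSucc < i.succ).le
      rcases lt_or_eq_of_le hmono with hlt | heq2
      · left
        show M π (π i.castSucc) < M π (π i.succ)
        rw [hMcs, hMs]; exact hlt
      · right
        constructor
        · show M π (π i.castSucc) = M π (π i.succ)
          rw [hMcs, hMs]; exact heq2
        · show OrderDual.toDual (π i.castSucc) < OrderDual.toDual (π i.succ)
          simpa using hdesc

theorem G_ker_M_eq {π : Equiv.Perm (Fin n)} (hA : Avoids23d1 π) :
    G (Setoid.ker (M π)) = π := by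
  set s := Setoid.ker (M π) with hs
  have h1 : (fun i => key s (π i)) = ⇑((keyset s).orderEmbOfFin (keyset_card s)) :=
    Finset.orderEmbOfFin_unique _ (fun x => Finset.mem_image.2 ⟨π x, mem_univ _, rfl⟩)
      (key_ker_strictMono hA)
  have h2 : (fun i => key s (G s i)) = ⇑((keyset s).orderEmbOfFin (keyset_card s)) :=
    Finset.orderEmbOfFin_unique _ (fun x => Finset.mem_image.2 ⟨G s x, mem_univ _, rfl⟩)
      (key_G_strictMono s)
  apply Equiv.ext
  intro i
  apply key_injective s
  exact (congrFun h2 i).trans (congrFun h1 i).symm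

noncomputable def setoidEquivAvoiders (n : ℕ) :
    Setoid (Fin n) ≃ {π : Equiv.Perm (Fin n) // Avoids23d1 π} :=
  Equiv.ofBijective (fun s => ⟨G s, G_avoids s⟩)
    ⟨fun s s' h => G_injective (congrArg Subtype.val h),
     fun π => ⟨Setoid.ker (M π.1), Subtype.ext (G_ker_M_eq π.2)⟩⟩

/-- max of the class of 0 -/
noncomputable def mx {m : ℕ} (s : Setoid (Fin (m+1))) : Fin (m+1) :=
  (cls s 0).max' ⟨0, self_mem_cls⟩

lemma rel_mx {m : ℕ} (s : Setoid (Fin (m+1))) : s 0 (mx s) :=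
  mem_cls.1 (Finset.max'_mem _ _)

lemma le_mx {m : ℕ} {s : Setoid (Fin (m+1))} {a : Fin (m+1)} (h : s 0 a) : a ≤ mx s :=
  Finset.le_max' _ _ (mem_cls.2 h)

lemma mcls_zero {m : ℕ} (s : Setoid (Fin (m+1))) : mcls s 0 = 0 :=
  le_antisymm (mcls_le s 0) (Fin.zero_le _)

lemma G_zero {m : ℕ} (s : Setoid (Fin (m+1))) : G s 0 = mx s := by
  have hkmx : key s (mx s) = toLex (0, OrderDual.toDual (mx s)) := by
    rw [key, mcls_eq_of_rel (s.symm (rel_mx s)), mcls_zero]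
  have hmin : ∀ a, key s (mx s) ≤ key s a := by
    intro a
    rw [hkmx, key, Prod.Lex.le_iff]
    rcases (Fin.zero_le (mcls s a)).lt_or_eq with hpos | h0
    · left; exact hpos
    · right
      refine ⟨h0, ?_⟩
      have hrel : s 0 a := by
        have := rel_mcls s a
        rw [← h0] at this
        exact s.symm this
      simpa using le_mx hrel
  have h1 : key s (G s 0) ≤ key s (mx s) := by
    have := (key_G_strictMono s).monotone (Fin.zero_le ((G s).symm (mx s)))
    change key s (G s 0) ≤ key s (G s ((G s).symm (mx s))) at this
    rwa [(G s).apply_symm_apply] at this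
  exact key_injective s (le_antisymm h1 (hmin _))



instance setoidFinite (α : Type*) [Finite α] : Finite (Setoid α) :=
  Finite.of_injective (fun s : Setoid α => s.r)
    (fun s t h => by cases s; cases t; simp only at h; subst h; rfl)

/-- Setoids transport along equivs. -/
def setoidCongr {α β : Type*} (e : α ≃ β) : Setoid α ≃ Setoid β where
  toFun s := Setoid.comap e.symm s
  invFun t := Setoid.comap e t
  left_inv s := Setoid.ext fun a b => by
    rw [Setoid.comap_rel, Setoid.comap_rel, e.symm_apply_apply, e.symm_apply_apply]
  right_inv t := Setoid.ext fun a b => by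
    rw [Setoid.comap_rel, Setoid.comap_rel, e.apply_symm_apply, e.apply_symm_apply]

lemma card_setoid_congr {α β : Type*} (e : α ≃ β) :
    Nat.card (Setoid α) = Nat.card (Setoid β) :=
  Nat.card_congr (setoidCongr e)

noncomputable def contractFun {α : Type*} (a : α) (P : α → Prop) (ha : ¬ P a) :
    α → {x // ¬ P x} := fun x => if h : P x then ⟨a, ha⟩ else ⟨x, h⟩

lemma contractFun_pos {α : Type*} {a : α} {P : α → Prop} {ha : ¬ P a} {x : α} (hx : P x) :
    contractFun a P ha x = ⟨a, ha⟩ := dif_pos hx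

lemma contractFun_neg {α : Type*} {a : α} {P : α → Prop} {ha : ¬ P a} {x : α} (hx : ¬ P x) :
    contractFun a P ha x = ⟨x, hx⟩ := dif_neg hx

/-- Contracting a set of points into the class of `a`. -/
noncomputable def contractEquiv {α : Type*} (a : α) (P : α → Prop) (ha : ¬ P a) :
    {s : Setoid α // ∀ x, P x → s a x} ≃ Setoid {x // ¬ P x} where
  toFun s := Setoid.comap Subtype.val s.1
  invFun t :=
    ⟨Setoid.comap (contractFun a P ha) t, by
      intro x hx
      refine (Setoid.comap_rel _ _ _ _).2 ?_
      rw [contractFun_pos hx, contractFun_neg ha]⟩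
  left_inv := by
    rintro ⟨s, hs⟩
    apply Subtype.ext
    apply Setoid.ext
    intro x y
    rw [Setoid.comap_rel, Setoid.comap_rel]
    have hrel : ∀ z : α, s ((contractFun a P ha z : {x // ¬ P x}) : α) z := by
      intro z
      by_cases h : P z
      · rw [contractFun_pos h]; exact hs z h
      · rw [contractFun_neg h]
    exact ⟨fun h => s.trans (s.symm (hrel x)) (s.trans h (hrel y)),
      fun h => s.trans (hrel x) (s.trans h (s.symm (hrel y)))⟩
  right_inv := by
    intro t
    apply Setoid.ext
    rintro ⟨x, hx⟩ ⟨y, hy⟩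
    rw [Setoid.comap_rel, Setoid.comap_rel, contractFun_neg hx, contractFun_neg hy]

/-- Isolating a point. -/
noncomputable def isolateEquiv {α : Type*} (a : α) :
    {s : Setoid α // ∀ x, s a x → x = a} ≃ Setoid {x // x ≠ a} where
  toFun s := Setoid.comap Subtype.val s.1
  invFun t :=
    ⟨⟨fun x y => (x = a ∧ y = a) ∨ ∃ hx : x ≠ a, ∃ hy : y ≠ a, t ⟨x, hx⟩ ⟨y, hy⟩,
      ⟨by
        intro x
        by_cases h : x = a
        · exact Or.inl ⟨h, h⟩
        · exact Or.inr ⟨h, h, t.refl _⟩,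
       by
        rintro x y (⟨h1, h2⟩ | ⟨hx, hy, h⟩)
        · exact Or.inl ⟨h2, h1⟩
        · exact Or.inr ⟨hy, hx, t.symm h⟩,
       by
        rintro x y z (⟨h1, h2⟩ | ⟨hx, hy, h⟩) (⟨h1', h2'⟩ | ⟨hy', hz', h'⟩)
        · exact Or.inl ⟨h1, h2'⟩
        · exact absurd h2 hy'
        · exact absurd h1' hy
        · exact Or.inr ⟨hx, hz', t.trans h h'⟩⟩⟩, by
      rintro x (⟨_, h2⟩ | ⟨hx, hy, _⟩)
      · exact h2
      · exact absurd rfl hx⟩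
  left_inv := by
    rintro ⟨s, hs⟩
    apply Subtype.ext
    apply Setoid.ext
    intro x y
    show (x = a ∧ y = a) ∨ (∃ hx : x ≠ a, ∃ hy : y ≠ a, s x y) ↔ s x y
    constructor
    · rintro (⟨rfl, rfl⟩ | ⟨_, _, h⟩)
      · exact s.refl _
      · exact h
    · intro h
      by_cases hx : x = a
      · subst hx
        exact Or.inl ⟨rfl, hs y h⟩
      · by_cases hy : y = a
        · subst hy
          exact absurd (hs x (s.symm h)) hx
        · exact Or.inr ⟨hx, hy, h⟩
  right_inv := by
    intro t
    apply Setoid.ext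
    rintro ⟨x, hx⟩ ⟨y, hy⟩
    show (x = a ∧ y = a) ∨ (∃ hx' : x ≠ a, ∃ hy' : y ≠ a, t ⟨x, hx'⟩ ⟨y, hy'⟩) ↔ t ⟨x, hx⟩ ⟨y, hy⟩
    constructor
    · rintro (⟨h1, _⟩ | ⟨_, _, h⟩)
      · exact absurd h1 hx
      · exact h
    · intro h
      exact Or.inr ⟨hx, hy, h⟩

lemma card_contract {m : ℕ} (T : Finset (Fin (m+1))) (hT : (0 : Fin (m+1)) ∉ T) :
    Nat.card {s : Setoid (Fin (m+1)) // ∀ x ∈ T, s 0 x} = bell (m + 1 - T.card) := by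
  have h1 : Nat.card {s : Setoid (Fin (m+1)) // ∀ x ∈ T, s 0 x}
      = Nat.card (Setoid {x : Fin (m+1) // ¬ x ∈ T}) := by
    refine Nat.card_congr ?_
    have := contractEquiv (0 : Fin (m+1)) (· ∈ T) hT
    exact (Equiv.subtypeEquivRight (fun s => by simp)).trans this
  rw [h1]
  have hc : Fintype.card {x : Fin (m+1) // ¬ x ∈ T} = m + 1 - T.card := by
    rw [Fintype.card_subtype_compl]
    congr 1
    · simp
    · exact (Fintype.card_coe T)
  rw [bell]
  exact card_setoid_congr (Fintype.equivFinOfCardEq hc)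

lemma mx_eq_iff {m : ℕ} {s : Setoid (Fin (m+1))} {κ : Fin (m+1)} :
    mx s = κ ↔ (s 0 κ ∧ ∀ x, κ < x → ¬ s 0 x) := by
  constructor
  · rintro rfl
    exact ⟨rel_mx s, fun x hx hrel => absurd (le_mx hrel) (not_le.2 hx)⟩
  · rintro ⟨h1, h2⟩
    refine le_antisymm ?_ (le_mx h1)
    by_contra hlt
    exact h2 (mx s) (not_le.1 hlt) (rel_mx s)

lemma mx_eq_zero_iff {m : ℕ} {s : Setoid (Fin (m+1))} :
    mx s = 0 ↔ ∀ x, s 0 x → x = 0 := by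
  constructor
  · intro h x hx
    exact le_antisymm (h ▸ le_mx hx) (Fin.zero_le x)
  · intro h
    exact h (mx s) (rel_mx s)


/-- classical indicator -/
noncomputable def indZ (p : Prop) : ℤ := if p then 1 else 0

lemma indZ_pos {p : Prop} (h : p) : indZ p = 1 := if_pos h
lemma indZ_neg {p : Prop} (h : ¬ p) : indZ p = 0 := if_neg h

lemma indZ_prod_boole {α : Type*} (S : Finset α) (p : α → Prop) :
    ∏ x ∈ S, indZ (p x) = indZ (∀ x ∈ S, p x) := by
  by_cases h : ∀ x ∈ S, p x
  · rw [indZ_pos h]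
    exact Finset.prod_eq_one (fun x hx => indZ_pos (h x hx))
  · push_neg at h
    obtain ⟨x, hx, hpx⟩ := h
    rw [indZ_neg (by push_neg; exact ⟨x, hx, hpx⟩)]
    exact Finset.prod_eq_zero hx (indZ_neg hpx)

lemma hcardZ {α : Type*} [Finite α] (p : α → Prop) :
    letI : Fintype α := Fintype.ofFinite α
    (Nat.card {x // p x} : ℤ) = ∑ x : α, indZ (p x) := by
  letI : Fintype α := Fintype.ofFinite α
  classical
  rw [Nat.card_eq_fintype_card, Fintype.card_subtype, Finset.card_filter]
  push_cast
  refine Finset.sum_congr rfl (fun x _ => ?_)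
  by_cases h : p x
  · rw [if_pos h, indZ_pos h]
  · rw [if_neg h, indZ_neg h]

lemma prod_one_sub {α : Type*} [DecidableEq α] (U : Finset α) (f : α → ℤ) :
    ∏ x ∈ U, (1 - f x) = ∑ T ∈ U.powerset, (-1)^T.card * ∏ x ∈ T, f x := by
  have h : ∀ x ∈ U, (1 : ℤ) - f x = (- f x) + 1 := by intros; ring
  rw [Finset.prod_congr rfl h, Finset.prod_add]
  refine Finset.sum_congr rfl (fun T _ => ?_)
  rw [Finset.prod_const_one, mul_one]
  calc ∏ x ∈ T, -f x = ∏ x ∈ T, (-1) * f x := Finset.prod_congr rfl (fun x _ => by ring)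
  _ = ((-1:ℤ)^T.card) * ∏ x ∈ T, f x := by rw [Finset.prod_mul_distrib, Finset.prod_const]

lemma ind_eq {m : ℕ} (κ : Fin (m+1)) (s : Setoid (Fin (m+1))) :
    indZ (mx s = κ) = indZ (s 0 κ) * ∏ x ∈ Finset.Ioi κ, (1 - indZ (s 0 x)) := by
  by_cases h1 : s 0 κ
  · by_cases h2 : ∀ x ∈ Finset.Ioi κ, ¬ s 0 x
    · rw [indZ_pos h1, indZ_pos (mx_eq_iff.2 ⟨h1, fun x hx => h2 x (Finset.mem_Ioi.2 hx)⟩)]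
      have hp : ∏ x ∈ Finset.Ioi κ, (1 - indZ (s 0 x)) = 1 :=
        Finset.prod_eq_one (fun x hx => by rw [indZ_neg (h2 x hx)]; ring)
      rw [hp]; ring
    · push_neg at h2
      obtain ⟨x, hx, hrel⟩ := h2
      have hmx : mx s ≠ κ := fun h => (mx_eq_iff.1 h).2 x (Finset.mem_Ioi.1 hx) hrel
      have hp : ∏ y ∈ Finset.Ioi κ, (1 - indZ (s 0 y)) = 0 :=
        Finset.prod_eq_zero hx (by rw [indZ_pos hrel]; ring)
      rw [indZ_neg hmx, hp]; ring
  · have hmx : mx s ≠ κ := fun h => h1 (mx_eq_iff.1 h).1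
    rw [indZ_neg hmx, indZ_neg h1, zero_mul]

lemma count_mx_eq {m : ℕ} (κ : Fin (m+1)) (hκ : κ ≠ 0) :
    (Nat.card {s : Setoid (Fin (m+1)) // mx s = κ} : ℤ)
      = ∑ i ∈ Finset.range ((m - κ.1) + 1),
          (-1 : ℤ)^i * ((m - κ.1).choose i) * (bell (m - i) : ℤ) := by
  letI : Fintype (Setoid (Fin (m+1))) := Fintype.ofFinite _
  rw [hcardZ (fun s : Setoid (Fin (m+1)) => mx s = κ)]
  have step1 : ∑ s : Setoid (Fin (m+1)), indZ (mx s = κ)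
      = ∑ s : Setoid (Fin (m+1)), ∑ T ∈ (Finset.Ioi κ).powerset,
          (-1:ℤ)^T.card * ∏ x ∈ insert κ T, indZ (s 0 x) := by
    refine Finset.sum_congr rfl (fun s _ => ?_)
    rw [ind_eq κ s, prod_one_sub, Finset.mul_sum]
    refine Finset.sum_congr rfl (fun T hT => ?_)
    have hκT : κ ∉ T := fun h =>
      absurd (Finset.mem_Ioi.1 (Finset.mem_powerset.1 hT h)) (lt_irrefl κ)
    rw [Finset.prod_insert hκT]
    ring
  rw [step1, Finset.sum_comm]
  have step2 : ∀ T ∈ (Finset.Ioi κ).powerset,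
      (∑ s : Setoid (Fin (m+1)), (-1:ℤ)^T.card * ∏ x ∈ insert κ T, indZ (s 0 x))
        = (-1:ℤ)^T.card * (bell (m - T.card) : ℤ) := by
    intro T hT
    have hκT : κ ∉ T := fun h =>
      absurd (Finset.mem_Ioi.1 (Finset.mem_powerset.1 hT h)) (lt_irrefl κ)
    have hTsub := Finset.mem_powerset.1 hT
    have h0 : (0 : Fin (m+1)) ∉ insert κ T := by
      intro h
      rcases Finset.mem_insert.1 h with h | h
      · exact hκ h.symm
      · have h' := Finset.mem_Ioi.1 (hTsub h)
        exact absurd (Fin.zero_le κ) (not_le.2 h')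
    rw [← Finset.mul_sum]
    congr 1
    have hps : ∀ s : Setoid (Fin (m+1)), ∏ x ∈ insert κ T, indZ (s 0 x)
        = indZ (∀ x ∈ insert κ T, s 0 x) := fun s => indZ_prod_boole _ _
    rw [Finset.sum_congr rfl (fun s _ => hps s),
      ← hcardZ (fun s : Setoid (Fin (m+1)) => ∀ x ∈ insert κ T, s 0 x),
      card_contract _ h0]
    have harg : m + 1 - (insert κ T).card = m - T.card := by
      rw [Finset.card_insert_of_notMem hκT]
      omega
    rw [harg]
  rw [Finset.sum_congr rfl step2, Finset.sum_powerset]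
  have hU : (Finset.Ioi κ).card = m - κ.1 := by
    rw [Fin.card_Ioi]
    omega
  rw [hU]
  refine Finset.sum_congr rfl (fun j hj => ?_)
  have hinner : ∀ T ∈ Finset.powersetCard j (Finset.Ioi κ),
      (-1:ℤ)^T.card * (bell (m - T.card) : ℤ) = (-1:ℤ)^j * (bell (m - j) : ℤ) := by
    intro T hT
    rw [(Finset.mem_powersetCard.1 hT).2]
  rw [Finset.sum_congr rfl hinner, Finset.sum_const, Finset.card_powersetCard, hU]
  push_cast
  ring


/-- equiv between Fin (m+1) minus 0 and Fin m -/
def predEquiv (m : ℕ) : {x : Fin (m+1) // x ≠ 0} ≃ Fin m where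
  toFun x := x.1.pred x.2
  invFun j := ⟨j.succ, Fin.succ_ne_zero j⟩
  left_inv x := Subtype.ext (Fin.succ_pred x.1 x.2)
  right_inv j := Fin.pred_succ _

noncomputable def avoidersEquivMx (m : ℕ) (κ : Fin (m+1)) :
    {s : Setoid (Fin (m+1)) // mx s = κ}
      ≃ {π : Equiv.Perm (Fin (m+1)) // Avoids23d1 π ∧ π 0 = κ} :=
  (Equiv.subtypeEquiv (setoidEquivAvoiders (m+1))
      (fun s => by
        show mx s = κ ↔ ((setoidEquivAvoiders (m+1)) s).1 0 = κ
        have : ((setoidEquivAvoiders (m+1)) s).1 = G s := rfl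
        rw [this, G_zero s])).trans
    (Equiv.subtypeSubtypeEquivSubtypeInter Avoids23d1 (fun π => π 0 = κ))

lemma count_one (m : ℕ) :
    Nat.card {π : Equiv.Perm (Fin (m+1)) // Avoids23d1 π ∧ π 0 = 0} = bell m := by
  rw [← Nat.card_congr (avoidersEquivMx m 0)]
  rw [Nat.card_congr ((Equiv.subtypeEquivRight
    (fun s : Setoid (Fin (m+1)) => mx_eq_zero_iff)).trans
      ((isolateEquiv (0 : Fin (m+1))).trans (setoidCongr (predEquiv m))))]
  rfl

lemma count_k (m : ℕ) (κ : Fin (m+1)) (hκ : κ ≠ 0) :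
    (Nat.card {π : Equiv.Perm (Fin (m+1)) // Avoids23d1 π ∧ π 0 = κ} : ℤ)
      = ∑ i ∈ Finset.range ((m - κ.1) + 1),
          (-1 : ℤ)^i * ((m - κ.1).choose i) * (bell (m - i) : ℤ) := by
  rw [← Nat.card_congr (avoidersEquivMx m κ)]
  exact count_mx_eq κ hκ

end BellProof

theorem bell_distribution (n : ℕ) (hn : 2 ≤ n) :
    Nat.card {π : Equiv.Perm (Fin n) // Avoids23d1 π ∧ π ⟨0, by omega⟩ = ⟨0, by omega⟩} = bell (n - 1) ∧
    ∀ k : ℕ, (hk1 : 2 ≤ k) → (hk2 : k ≤ n) →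
      (Nat.card {π : Equiv.Perm (Fin n) // Avoids23d1 π ∧ π ⟨0, by omega⟩ = ⟨k - 1, by omega⟩} : ℤ) =
        ∑ i ∈ Finset.range (n - k + 1), (-1 : ℤ) ^ i * (((n - k)).choose i) * (bell (n - 1 - i) : ℤ) := by
  obtain ⟨m, rfl⟩ : ∃ m, n = m + 1 := ⟨n - 1, by omega⟩
  constructor
  · exact BellProof.count_one m
  · intro k hk1 hk2
    have hκ : (⟨k - 1, by omega⟩ : Fin (m+1)) ≠ 0 := by
      intro h
      have := congrArg Fin.val h
      simp at this
      omega
    have h1 := BellProof.count_k m ⟨k - 1, by omega⟩ hκ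
    have h2 : m - (⟨k - 1, by omega⟩ : Fin (m+1)).val = m + 1 - k := by
      simp
      omega
    rw [h2] at h1
    exact h1
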